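/- Let f : [ℓ,u] → ℝ be L_f-Lipschitz. Let the coarse uniform grid on [ℓ,u] have I ≥ 2 points and the fine uniform grid have J = 2I − 1 points. Let x*_fine ∈ ℝ^J and x*_coarse ∈ ℝ^I be the exact samples of f on the fine and coarse grids, let δ ∈ ℝ^I, and let x = midpoint linear interpolation of (x*_coarse + δ) ∈ ℝ^J. Then ‖x − x*_fine‖₂ ≤ √2·‖δ‖₂ + L_f·(u − ℓ)/(2·√(I − 1)). -/

import Mathlib

open Finset

/-- Uniform grid with `I` points on `[l, u]` (0-indexed): `t[i] = l + i·(u−l)/(I−1)`. -/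
noncomputable def unifGrid (l u : ℝ) (I : ℕ) (i : ℕ) : ℝ := l + i * (u - l) / ((I : ℝ) - 1)

/-- Midpoint linear interpolation (0-indexed): even entries copy `x`, odd entries are midpoints. -/
noncomputable def midInterp (x : ℕ → ℝ) (j : ℕ) : ℝ :=
  if j % 2 = 0 then x (j / 2) else (x (j / 2) + x (j / 2 + 1)) / 2

lemma sum_range_odd_split (g : ℕ → ℝ) (n : ℕ) :
    ∑ j ∈ range (2*n+1), g j
      = ∑ i ∈ range (n+1), g (2*i) + ∑ i ∈ range n, g (2*i+1) := by
  induction n with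
  | zero => simp
  | succ n ih =>
    have h1 : 2*(n+1)+1 = (2*n+1)+1+1 := by ring
    rw [h1, sum_range_succ, sum_range_succ, ih,
      sum_range_succ (fun i => g (2*i)) (n+1),
      sum_range_succ (fun i => g (2*i+1)) n]
    have e1 : 2*(n+1) = 2*n+1+1 := by ring
    have e2 : 2*n+1 = 2*n+1 := rfl
    rw [e1]
    ring

lemma minkowski_range (N : ℕ) (a b : ℕ → ℝ) :
    Real.sqrt (∑ j ∈ range N, (a j + b j) ^ 2)
      ≤ Real.sqrt (∑ j ∈ range N, a j ^ 2) + Real.sqrt (∑ j ∈ range N, b j ^ 2) := by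
  let A : EuclideanSpace ℝ (Fin N) := WithLp.toLp 2 (fun k => a k)
  let B : EuclideanSpace ℝ (Fin N) := WithLp.toLp 2 (fun k => b k)
  have hA : ‖A‖ = Real.sqrt (∑ j ∈ range N, a j ^ 2) := by
    rw [EuclideanSpace.norm_eq]
    congr 1
    rw [← Fin.sum_univ_eq_sum_range]
    exact Finset.sum_congr rfl (fun i _ => by simp [A, sq_abs])
  have hB : ‖B‖ = Real.sqrt (∑ j ∈ range N, b j ^ 2) := by
    rw [EuclideanSpace.norm_eq]
    congr 1
    rw [← Fin.sum_univ_eq_sum_range]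
    exact Finset.sum_congr rfl (fun i _ => by simp [B, sq_abs])
  have hAB : ‖A + B‖ = Real.sqrt (∑ j ∈ range N, (a j + b j) ^ 2) := by
    rw [EuclideanSpace.norm_eq]
    congr 1
    rw [← Fin.sum_univ_eq_sum_range]
    refine Finset.sum_congr rfl (fun i _ => ?_)
    simp [A, B, sq_abs]
  calc Real.sqrt (∑ j ∈ range N, (a j + b j) ^ 2) = ‖A + B‖ := hAB.symm
    _ ≤ ‖A‖ + ‖B‖ := norm_add_le A B
    _ = _ := by rw [hA, hB]


lemma midInterp_add (x y : ℕ → ℝ) (j : ℕ) :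
    midInterp (fun i => x i + y i) j = midInterp x j + midInterp y j := by
  unfold midInterp; split <;> ring

lemma midInterp_even (x : ℕ → ℝ) (i : ℕ) : midInterp x (2*i) = x i := by
  unfold midInterp
  simp [Nat.mul_mod_right, Nat.mul_div_cancel_left]

lemma midInterp_odd (x : ℕ → ℝ) (i : ℕ) :
    midInterp x (2*i+1) = (x i + x (i+1)) / 2 := by
  unfold midInterp
  have h1 : (2*i+1) % 2 = 1 := by omega
  have h2 : (2*i+1) / 2 = i := by omega
  simp [h1, h2]

/-- Inexact interpolation error bound. -/
theorem inexact_interpolation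
    (l u : ℝ) (hlu : l < u) (I : ℕ) (hI : 2 ≤ I)
    (f : ℝ → ℝ) (Lf : ℝ)
    (hfLip : ∀ s ∈ Set.Icc l u, ∀ t ∈ Set.Icc l u, |f s - f t| ≤ Lf * |s - t|)
    (xcoarse xfine δ : ℕ → ℝ)
    (hxc : ∀ i < I, xcoarse i = f (unifGrid l u I i))
    (hxf : ∀ j < 2 * I - 1, xfine j = f (unifGrid l u (2 * I - 1) j)) :
    Real.sqrt (∑ j ∈ range (2 * I - 1),
        (midInterp (fun i => xcoarse i + δ i) j - xfine j) ^ 2) ≤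
      Real.sqrt 2 * Real.sqrt (∑ i ∈ range I, δ i ^ 2) +
        Lf * (u - l) / (2 * Real.sqrt ((I : ℝ) - 1)) := by
  obtain ⟨m, rfl⟩ : ∃ m, I = m + 1 := ⟨I - 1, by omega⟩
  have hm1 : 1 ≤ m := by omega
  have hN : 2 * (m + 1) - 1 = 2 * m + 1 := by omega
  rw [hN] at hxf ⊢
  have hmR : (0:ℝ) < (m:ℝ) := by exact_mod_cast hm1
  have hul : (0:ℝ) < u - l := by linarith
  -- grid facts
  set t : ℕ → ℝ := unifGrid l u (m+1) with ht
  have htdef : ∀ i : ℕ, t i = l + i * (u - l) / m := by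
    intro i; simp only [ht, unifGrid]; push_cast; ring
  have hteq : ∀ i : ℕ, unifGrid l u (2*m+1) (2*i) = t i := by
    intro i
    rw [htdef]
    unfold unifGrid
    push_cast
    field_simp
    ring
  have hmid : ∀ i : ℕ, unifGrid l u (2*m+1) (2*i+1) = (t i + t (i+1)) / 2 := by
    intro i
    rw [htdef, htdef]
    unfold unifGrid
    push_cast
    field_simp
    ring
  have hmem : ∀ i ≤ m, t i ∈ Set.Icc l u := by
    intro i hi
    rw [htdef]
    have hiR : (i:ℝ) ≤ (m:ℝ) := by exact_mod_cast hi
    have h0 : (0:ℝ) ≤ (i:ℝ) := Nat.cast_nonneg i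
    constructor
    · have : 0 ≤ (i:ℝ) * (u - l) / m := by positivity
      linarith
    · have hd : (i:ℝ) * (u - l) / m ≤ u - l := by
        rw [div_le_iff₀ hmR]; nlinarith
      linarith
  have hLf : 0 ≤ Lf := by
    have := hfLip l (by constructor <;> linarith) u (by constructor <;> linarith)
    have habs : |l - u| = u - l := by rw [abs_sub_comm]; exact abs_of_pos hul
    rw [habs] at this
    nlinarith [abs_nonneg (f l - f u)]
  -- step size
  have hstep : ∀ i : ℕ, t (i+1) - t i = (u - l) / m := by
    intro i; rw [htdef, htdef]; push_cast; field_simp; ring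
  -- decompose
  set A : ℕ → ℝ := fun j => midInterp xcoarse j - xfine j with hA
  set B : ℕ → ℝ := fun j => midInterp δ j with hB
  have hdecomp : ∑ j ∈ range (2*m+1),
      (midInterp (fun i => xcoarse i + δ i) j - xfine j) ^ 2
      = ∑ j ∈ range (2*m+1), (A j + B j) ^ 2 := by
    refine Finset.sum_congr rfl fun j _ => ?_
    rw [midInterp_add]; simp [hA, hB]; ring
  rw [hdecomp]
  have hmink := minkowski_range (2*m+1) A B
  -- bound on B part
  have hBsum : ∑ j ∈ range (2*m+1), B j ^ 2 ≤ 2 * ∑ i ∈ range (m+1), δ i ^ 2 := by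
    rw [sum_range_odd_split]
    have he : ∑ i ∈ range (m+1), B (2*i) ^ 2 = ∑ i ∈ range (m+1), δ i ^ 2 := by
      refine Finset.sum_congr rfl fun i _ => ?_
      simp [hB, midInterp_even]
    have ho : ∑ i ∈ range m, B (2*i+1) ^ 2
        ≤ ∑ i ∈ range m, (δ i ^ 2 + δ (i+1) ^ 2) / 2 := by
      refine Finset.sum_le_sum fun i _ => ?_
      simp only [hB, midInterp_odd]
      nlinarith [sq_nonneg (δ i - δ (i+1))]
    have h1 : ∑ i ∈ range m, δ i ^ 2 ≤ ∑ i ∈ range (m+1), δ i ^ 2 := by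
      apply Finset.sum_le_sum_of_subset_of_nonneg (by simp [Finset.range_subset]; intro x hx; omega)
      intros; positivity
    have h2 : ∑ i ∈ range m, δ (i+1) ^ 2 ≤ ∑ i ∈ range (m+1), δ i ^ 2 := by
      rw [Finset.sum_range_succ' (fun i => δ i ^ 2) m]
      nlinarith [sq_nonneg (δ 0)]
    have hsplit : ∑ i ∈ range m, (δ i ^ 2 + δ (i+1) ^ 2) / 2
        = (∑ i ∈ range m, δ i ^ 2 + ∑ i ∈ range m, δ (i+1) ^ 2) / 2 := by
      rw [← Finset.sum_add_distrib, Finset.sum_div]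
    rw [he]
    rw [hsplit] at ho
    linarith
  have hBbound : Real.sqrt (∑ j ∈ range (2*m+1), B j ^ 2)
      ≤ Real.sqrt 2 * Real.sqrt (∑ i ∈ range (m+1), δ i ^ 2) := by
    rw [← Real.sqrt_mul (by norm_num : (0:ℝ) ≤ 2)]
    exact Real.sqrt_le_sqrt hBsum
  -- bound on A part
  set h : ℝ := (u - l) / m with hh
  have hh0 : 0 < h := by positivity
  have hAeven : ∀ i ≤ m, A (2*i) = 0 := by
    intro i hi
    simp only [hA]
    rw [midInterp_even, hxc i (by omega), hxf (2*i) (by omega), hteq]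
    ring
  have hAodd : ∀ i < m, |A (2*i+1)| ≤ Lf * h / 2 := by
    intro i hi
    simp only [hA]
    rw [midInterp_odd, hxc i (by omega), hxc (i+1) (by omega),
      hxf (2*i+1) (by omega), hmid]
    set c : ℝ := (t i + t (i+1)) / 2 with hc
    have h1 := hmem i (by omega)
    have h2 := hmem (i+1) (by omega)
    have hcmem : c ∈ Set.Icc l u := by
      rw [Set.mem_Icc] at h1 h2 ⊢
      constructor
      · have := h1.1; have := h2.1; rw [hc]; linarith
      · have := h1.2; have := h2.2; rw [hc]; linarith
    have hd : t (i+1) - t i = h := hstep i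
    have e1 := hfLip (t i) h1 c hcmem
    have e2 := hfLip (t (i+1)) h2 c hcmem
    have ha1 : |t i - c| = h/2 := by
      rw [hc, abs_of_nonpos (by linarith)]; linarith
    have ha2 : |t (i+1) - c| = h/2 := by
      rw [hc, abs_of_nonneg (by linarith)]; linarith
    rw [ha1] at e1; rw [ha2] at e2
    have key : (f (t i) + f (t (i+1))) / 2 - f c
        = ((f (t i) - f c) + (f (t (i+1)) - f c)) / 2 := by ring
    rw [key, abs_div, abs_of_pos (by norm_num : (0:ℝ) < 2)]
    have := abs_add_le (f (t i) - f c) (f (t (i+1)) - f c)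
    linarith
  have hAsum : ∑ j ∈ range (2*m+1), A j ^ 2 ≤ m * (Lf * h / 2)^2 := by
    rw [sum_range_odd_split]
    have he : ∑ i ∈ range (m+1), A (2*i) ^ 2 = 0 := by
      apply Finset.sum_eq_zero; intro i hi
      rw [hAeven i (by simp only [mem_range] at hi; omega)]; ring
    have ho : ∑ i ∈ range m, A (2*i+1) ^ 2 ≤ ∑ _i ∈ range m, (Lf*h/2)^2 := by
      refine Finset.sum_le_sum fun i hi => ?_
      have hb := hAodd i (mem_range.mp hi)
      calc A (2*i+1)^2 = |A (2*i+1)|^2 := (sq_abs _).symm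
        _ ≤ (Lf*h/2)^2 := by nlinarith [abs_nonneg (A (2*i+1))]
    rw [Finset.sum_const, card_range, nsmul_eq_mul] at ho
    rw [he]
    linarith
  have hAbound : Real.sqrt (∑ j ∈ range (2*m+1), A j ^ 2)
      ≤ Lf * (u-l) / (2 * Real.sqrt m) := by
    have hnn : 0 ≤ Lf * h / 2 := by positivity
    have hs : Real.sqrt ((m:ℝ) * (Lf*h/2)^2) = Real.sqrt m * (Lf*h/2) := by
      rw [Real.sqrt_mul (Nat.cast_nonneg m), Real.sqrt_sq hnn]
    have hle := Real.sqrt_le_sqrt hAsum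
    rw [hs] at hle
    refine hle.trans (le_of_eq ?_)
    have hsm : Real.sqrt m * Real.sqrt m = (m:ℝ) := Real.mul_self_sqrt (le_of_lt hmR)
    have hsm0 : 0 < Real.sqrt m := Real.sqrt_pos.mpr hmR
    rw [hh, eq_div_iff (by positivity : (2:ℝ) * Real.sqrt m ≠ 0)]
    have hrw : Real.sqrt m * (Lf * ((u-l)/m) / 2) * (2 * Real.sqrt m)
        = (Real.sqrt m * Real.sqrt m) * (Lf * (u-l) / m) := by ring
    rw [hrw, hsm]
    field_simp
  have hcast : ((m:ℝ) + 1) - 1 = (m:ℝ) := by ring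
  push_cast
  rw [hcast]
  linarith [hmink, hAbound, hBbound]
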